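/- arXiv:1206.0185 — 2 statements merged into one kernel-verified Lean document; each statement's English description precedes it below -/
import Mathlib

section
/- A finite group G is nilpotent if and only if every maximal subgroup of G is F̃(G)-conjugate-permutable, i.e., for every maximal subgroup M of G and every x ∈ F̃(G), the product of M and its conjugate M^x satisfies M·M^x = M^x·M (as subsets of G). -/
open scoped Pointwise

section Defs

variable {G : Type*} [Group G]

/-- The conjugate `H^x = x⁻¹ H x` of a subgroup `H` of `G`. -/
def conjS (x : G) (H : Subgroup G) : Subgroup G :=
  H.map (MulAut.conj x⁻¹).toMonoidHom

/-- A subgroup `H` of `G` is `R`-conjugate-permutable (for a subset `R ⊆ G`) if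
`H · H^x = H^x · H` as subsets of `G`, for all `x ∈ R`. -/
def IsRCP (R : Set G) (H : Subgroup G) : Prop :=
  ∀ x ∈ R, (H : Set G) * (conjS x H : Set G) = (conjS x H : Set G) * (H : Set G)

/-- A subgroup `H` of `G` is conjugate-permutable if `H · H^x = H^x · H` for all `x ∈ G`. -/
def IsConjPermutable (H : Subgroup G) : Prop :=
  IsRCP (Set.univ : Set G) H

/-- `N` is a minimal normal subgroup of `G`. -/
def IsMinimalNormal (N : Subgroup G) : Prop :=
  N.Normal ∧ N ≠ ⊥ ∧ ∀ K : Subgroup G, K.Normal → K ≤ N → K = ⊥ ∨ K = N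

/-- `H` is an abnormal subgroup of `G`: `x ∈ ⟨H, H^x⟩` for all `x ∈ G`. -/
def IsAbnormal (H : Subgroup G) : Prop :=
  ∀ x : G, x ∈ H ⊔ conjS x H

/-- `H` is normal in the subgroup `K` of `G`. -/
def IsNormalIn (H K : Subgroup G) : Prop :=
  H ≤ K ∧ ∀ x ∈ K, ∀ h ∈ H, x * h * x⁻¹ ∈ H

/-- `H` is subnormal in the subgroup `K`: there is a chain
`H = H₀ ◁ H₁ ◁ ⋯ ◁ Hₙ = K` with each term normal in the next. -/
def IsSubnormalIn (H K : Subgroup G) : Prop :=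
  ∃ (n : ℕ) (s : Fin (n + 1) → Subgroup G),
    s 0 = H ∧ s (Fin.last n) = K ∧
    ∀ i : Fin n, s i.castSucc ≤ s i.succ ∧
      ∀ x ∈ s i.succ, ∀ h ∈ s i.castSucc, x * h * x⁻¹ ∈ s i.castSucc

/-- `H` is pronormal in the subgroup `K`: for every `x ∈ K`, the subgroups `H` and `H^x`
are conjugate in `⟨H, H^x⟩`. -/
def IsPronormalIn (H K : Subgroup G) : Prop :=
  H ≤ K ∧ ∀ x ∈ K, ∃ k ∈ H ⊔ conjS x H, conjS k H = conjS x H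

end Defs

/-- The socle of `G`: the subgroup generated by all minimal normal subgroups of `G`. -/
def socle' (G : Type*) [Group G] : Subgroup G :=
  sSup {N : Subgroup G | IsMinimalNormal N}

/-- `F̃(G)`: the subgroup of `G` containing the Frattini subgroup `Φ(G)` with
`F̃(G)/Φ(G) = Soc(G/Φ(G))`. -/
def Ftilde (G : Type*) [Group G] : Subgroup G :=
  (socle' (G ⧸ frattini G)).comap (QuotientGroup.mk' (frattini G))

/-- The Fitting subgroup `F(G)`: the largest normal nilpotent subgroup of `G`
(the subgroup generated by all normal nilpotent subgroups). -/
def Fitting (G : Type*) [Group G] : Subgroup G :=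
  sSup {N : Subgroup G | N.Normal ∧ Group.IsNilpotent N}

section FittingNormal

variable {G : Type*} [Group G]

lemma map_conj_eq_self {N : Subgroup G} (hN : N.Normal) (g : G) :
    N.map (MulAut.conj g).toMonoidHom = N := by
  ext x
  simp only [Subgroup.mem_map, MulEquiv.coe_toMonoidHom, MulAut.conj_apply]
  constructor
  · rintro ⟨n, hn, rfl⟩; exact hN.conj_mem n hn g
  · intro hx
    refine ⟨g⁻¹ * x * g, by simpa using hN.conj_mem x hx g⁻¹, by group⟩

instance Fitting_normal (G : Type*) [Group G] : (Fitting G).Normal := by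
  constructor
  intro n hn g
  have h1 : (Fitting G).map (MulAut.conj g).toMonoidHom = Fitting G := by
    unfold Fitting
    rw [sSup_eq_iSup, Subgroup.map_iSup]
    refine iSup_congr fun N => ?_
    rw [Subgroup.map_iSup]
    exact iSup_congr_Prop Iff.rfl fun hN => map_conj_eq_self hN.1 g
  rw [← h1]
  exact Subgroup.mem_map.2 ⟨n, hn, rfl⟩

end FittingNormal

/-- The generalized Fitting subgroup `F*(G)`: the subgroup containing `F(G)` with
`F*(G)/F(G) = Soc(C_G(F(G))·F(G)/F(G))`. -/
def FStar (G : Type*) [Group G] : Subgroup G :=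
  Subgroup.comap (QuotientGroup.mk' (Fitting G))
    (Subgroup.map
      ((Subgroup.centralizer (Fitting G : Set G) ⊔ Fitting G).map
          (QuotientGroup.mk' (Fitting G))).subtype
      (socle' ((Subgroup.centralizer (Fitting G : Set G) ⊔ Fitting G).map
          (QuotientGroup.mk' (Fitting G)))))

/-- A group is supersoluble if it has a normal series all of whose terms are
normal in the whole group and all of whose factors are cyclic; the factor
`s (i+1) / s i` being cyclic is expressed by `s (i+1) ≤ s i ⊔ ⟨g⟩` for some `g`. -/
def IsSupersoluble (G : Type*) [Group G] : Prop :=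
  ∃ (n : ℕ) (s : Fin (n + 1) → Subgroup G),
    Monotone s ∧ s 0 = ⊥ ∧ s (Fin.last n) = ⊤ ∧ (∀ i, (s i).Normal) ∧
    ∀ i : Fin n, ∃ g : G, s i.succ ≤ s i.castSucc ⊔ Subgroup.zpowers g

/-- A group is metanilpotent if it has a normal nilpotent subgroup with
nilpotent quotient. -/
def IsMetanilpotent (G : Type*) [Group G] : Prop :=
  ∃ (N : Subgroup G) (hN : N.Normal),
    Group.IsNilpotent N ∧
      @Group.IsNilpotent (G ⧸ N) (@QuotientGroup.Quotient.group G _ N hN)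

section ExtraAux
open Subgroup

section Aux
variable {G : Type*} [Group G]

lemma mem_conjS {x g : G} {H : Subgroup G} : g ∈ conjS x H ↔ ∃ h ∈ H, x⁻¹ * h * x = g := by
  constructor
  · rintro ⟨h, hh, rfl⟩
    exact ⟨h, hh, by simp [MulAut.conj_apply]⟩
  · rintro ⟨h, hh, rfl⟩
    exact ⟨h, hh, by simp [MulAut.conj_apply]⟩

lemma conjS_eq_self_of_mem {x : G} {H : Subgroup G} (hx : x ∈ H) : conjS x H = H := by
  ext g; rw [mem_conjS]
  constructor
  · rintro ⟨h, hh, rfl⟩; exact mul_mem (mul_mem (inv_mem hx) hh) hx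
  · intro hg; exact ⟨x * g * x⁻¹, mul_mem (mul_mem hx hg) (inv_mem hx), by group⟩

lemma conjS_normal {x : G} {H : Subgroup G} (hH : H.Normal) : conjS x H = H := by
  ext g; rw [mem_conjS]
  constructor
  · rintro ⟨h, hh, rfl⟩; exact hH.conj_mem' h hh x
  · intro hg; exact ⟨x * g * x⁻¹, hH.conj_mem g hg x, by group⟩

lemma card_conjS [Finite G] (x : G) (H : Subgroup G) : Nat.card (conjS x H) = Nat.card H :=
  (Nat.card_congr (Subgroup.equivMapOfInjective H _ (MulAut.conj x⁻¹).injective).toEquiv).symm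

lemma Subgroup.eq_of_le_of_card_le' [Finite G] {K M : Subgroup G} (h : K ≤ M)
    (hc : Nat.card M ≤ Nat.card K) : K = M :=
  SetLike.coe_injective (Set.eq_of_subset_of_ncard_le h
    (by rwa [← Nat.card_coe_set_eq, ← Nat.card_coe_set_eq]) (Set.toFinite _))

lemma coe_sup_of_comm {H K : Subgroup G}
    (h : (H : Set G) * (K : Set G) = (K : Set G) * (H : Set G)) :
    ((H ⊔ K : Subgroup G) : Set G) = (H : Set G) * (K : Set G) := by
  have hsub : ∀ {a : G}, a ∈ (H : Set G) * (K : Set G) → a ∈ H ⊔ K := by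
    rintro a ⟨h1, hh1, k1, hk1, rfl⟩
    exact mul_mem (le_sup_left (α := Subgroup G) hh1) (le_sup_right (α := Subgroup G) hk1)
  let S : Subgroup G :=
    { carrier := (H : Set G) * (K : Set G)
      one_mem' := ⟨1, one_mem H, 1, one_mem K, by simp⟩
      mul_mem' := by
        rintro a b ⟨h1, hh1, k1, hk1, rfl⟩ ⟨h2, hh2, k2, hk2, rfl⟩
        have : (k1 : G) * h2 ∈ (K : Set G) * (H : Set G) := ⟨k1, hk1, h2, hh2, rfl⟩
        rw [← h] at this
        obtain ⟨h3, hh3, k3, hk3, heq⟩ := this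
        refine ⟨h1 * h3, mul_mem hh1 hh3, k3 * k2, mul_mem hk3 hk2, ?_⟩
        show h1 * h3 * (k3 * k2) = h1 * k1 * (h2 * k2)
        simp only at heq
        calc h1 * h3 * (k3 * k2) = h1 * (h3 * k3) * k2 := by group
        _ = h1 * (k1 * h2) * k2 := by rw [heq]
        _ = h1 * k1 * (h2 * k2) := by group
      inv_mem' := by
        rintro a ⟨h1, hh1, k1, hk1, rfl⟩
        have : (k1 : G)⁻¹ * h1⁻¹ ∈ (K : Set G) * (H : Set G) := ⟨k1⁻¹, inv_mem hk1, h1⁻¹, inv_mem hh1, rfl⟩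
        rw [← h] at this
        simpa [mul_inv_rev] using this }
  have hHS : H ≤ S := fun a ha => ⟨a, ha, 1, one_mem K, by simp⟩
  have hKS : K ≤ S := fun a ha => ⟨1, one_mem H, a, ha, by simp⟩
  apply subset_antisymm
  · intro a ha
    have : H ⊔ K ≤ S := sup_le hHS hKS
    exact this ha
  · intro a ha; exact hsub ha

end Aux

section Key
variable {G : Type*} [Group G] [Finite G]

lemma mem_of_permutable {M : Subgroup G} (hM : IsCoatom M) (hnn : ¬ M.Normal) {x : G}
    (hx : (M : Set G) * (conjS x M : Set G) = (conjS x M : Set G) * (M : Set G)) :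
    x ∈ M := by
  have hcoe := coe_sup_of_comm hx
  rcases eq_or_lt_of_le (le_sup_left : M ≤ M ⊔ conjS x M) with heq | hlt
  · -- conjS x M = M, so x normalizes M
    have hle : conjS x M ≤ M := by
      have h0 : conjS x M ≤ M ⊔ conjS x M := le_sup_right
      rwa [← heq] at h0
    have hCeq : conjS x M = M :=
      Subgroup.eq_of_le_of_card_le' hle (by rw [card_conjS])
    have hxinv : x⁻¹ ∈ Subgroup.normalizer (M : Set G) := by
      rw [Subgroup.mem_normalizer_iff]
      intro h
      constructor
      · intro hh
        have h1 : x⁻¹ * h * (x⁻¹)⁻¹ ∈ conjS x M := mem_conjS.2 ⟨h, hh, by group⟩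
        rwa [hCeq] at h1
      · intro hh
        have h1 : x⁻¹ * h * (x⁻¹)⁻¹ ∈ conjS x M := by rwa [hCeq]
        obtain ⟨m, hm, hme⟩ := mem_conjS.1 h1
        have hme' : x⁻¹ * (m * x) = x⁻¹ * (h * x) := by
          have := hme; simp only [inv_inv] at this
          simpa [mul_assoc] using this
        have h5 : m * x = h * x := mul_left_cancel hme'
        have h6 : m = h := mul_right_cancel h5
        rwa [← h6]
    rcases eq_or_lt_of_le M.le_normalizer with hn | hn
    · rw [← hn] at hxinv
      exact inv_mem_iff.mp hxinv
    · exact absurd (Subgroup.normalizer_eq_top_iff.1 (hM.2 _ hn)) hnn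
  · have htop : M ⊔ conjS x M = ⊤ := hM.2 _ hlt
    have hxmem : x ∈ ((M ⊔ conjS x M : Subgroup G) : Set G) := by
      rw [htop]; exact Subgroup.mem_top x
    rw [hcoe] at hxmem
    obtain ⟨m, hm, c, hc, hmc⟩ := hxmem
    obtain ⟨m', hm', rfl⟩ := mem_conjS.1 hc
    simp only at hmc
    have h2 : m * x⁻¹ * m' = 1 := by
      have h3 := congrArg (· * x⁻¹) hmc
      simpa [mul_assoc] using h3
    have h3 : m' = x * m⁻¹ := by
      have h4 := congrArg (fun y => x * m⁻¹ * y) h2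
      simp only [mul_one] at h4
      rw [← h4]; group
    have : x = m' * m := by rw [h3]; group
    rw [this]; exact mul_mem hm' hm

end Key

section Struct
variable {G : Type*} [Group G] [Finite G]

instance : Finite (Subgroup G) := Finite.of_injective _ SetLike.coe_injective

lemma exists_isMinimalNormal (h : Nontrivial G) : ∃ N : Subgroup G, IsMinimalNormal N := by
  have hS : (⊤ : Subgroup G) ∈ {K : Subgroup G | K.Normal ∧ K ≠ ⊥} := by
    refine ⟨⟨fun n _ g => Subgroup.mem_top _⟩, ?_⟩
    intro hbot
    obtain ⟨a, b, hab⟩ := h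
    have : a ∈ (⊥ : Subgroup G) := hbot ▸ Subgroup.mem_top a
    have hb : b ∈ (⊥ : Subgroup G) := hbot ▸ Subgroup.mem_top b
    rw [Subgroup.mem_bot] at this hb
    exact hab (this.trans hb.symm)
  obtain ⟨N, hN, hmin⟩ := Set.Finite.exists_minimal (Set.toFinite _) ⟨⊤, hS⟩
  refine ⟨N, hN.1, hN.2, ?_⟩
  intro K hK hKN
  by_cases hKbot : K = ⊥
  · exact Or.inl hKbot
  · exact Or.inr (le_antisymm hKN (hmin ⟨hK, hKbot⟩ hKN))

lemma mem_frattini_iff {x : G} : x ∈ frattini G ↔ ∀ M : Subgroup G, IsCoatom M → x ∈ M := by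
  constructor
  · intro hx M hM; exact frattini_le_coatom hM hx
  · intro hx
    have : frattini G = ⨅ M ∈ {H : Subgroup G | IsCoatom H}, M := rfl
    rw [this, Subgroup.mem_iInf]
    intro M
    rw [Subgroup.mem_iInf]
    exact fun hM => hx M hM

lemma exists_coatom_not_le {N : Subgroup G} (h : ¬ N ≤ frattini G) :
    ∃ M : Subgroup G, IsCoatom M ∧ ¬ N ≤ M := by
  by_contra hc
  push_neg at hc
  apply h
  intro x hx
  exact mem_frattini_iff.2 fun M hM => hc M hM hx

lemma isCoatom_map_of_surjective {H : Type*} [Group H] {f : G →* H} (hf : Function.Surjective f)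
    {M : Subgroup G} (hM : IsCoatom M) (hker : f.ker ≤ M) : IsCoatom (M.map f) := by
  constructor
  · intro htop
    have : Subgroup.comap f (M.map f) = ⊤ := by rw [htop, Subgroup.comap_top]
    rw [Subgroup.comap_map_eq, sup_eq_left.2 hker] at this
    exact hM.1 this
  · intro L hL
    have hML : M ≤ Subgroup.comap f L := by
      rw [← Subgroup.comap_map_eq_self (f := f) (H := M) hker]
      exact Subgroup.comap_mono hL.le
    have hne : M ≠ Subgroup.comap f L := by
      intro heq
      have : L = M.map f := by
        rw [← Subgroup.map_comap_eq_self_of_surjective hf L, ← heq]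
      exact hL.ne' this
    have htop : Subgroup.comap f L = ⊤ := hM.2 _ (lt_of_le_of_ne hML hne)
    rw [← Subgroup.map_comap_eq_self_of_surjective hf L, htop]
    exact Subgroup.map_top_of_surjective f hf

end Struct

section Frat
variable {G : Type*} [Group G] [Finite G]

lemma frattini_quotient_frattini [Finite G] : frattini (G ⧸ frattini G) = ⊥ := by
  rw [eq_bot_iff]
  intro q hq
  obtain ⟨x, rfl⟩ := QuotientGroup.mk'_surjective (frattini G) q
  have hx : x ∈ frattini G := by
    rw [mem_frattini_iff]
    intro M hM
    have hker : (QuotientGroup.mk' (frattini G)).ker ≤ M := by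
      rw [QuotientGroup.ker_mk']
      exact frattini_le_coatom hM
    have hco : IsCoatom (M.map (QuotientGroup.mk' (frattini G))) :=
      isCoatom_map_of_surjective (QuotientGroup.mk'_surjective _) hM hker
    have hmem : QuotientGroup.mk' (frattini G) x ∈ M.map (QuotientGroup.mk' (frattini G)) :=
      frattini_le_coatom hco hq
    rw [← Subgroup.comap_map_eq_self hker]
    exact hmem
  rw [Subgroup.mem_bot, ← QuotientGroup.ker_mk' (frattini G)] at *
  exact hx

/-- Frattini subgroup of a normal subgroup is trivial if frattini of the whole group is. -/
lemma frattini_subgroup_eq_bot {U : Subgroup G} (hU : U.Normal) (hG : frattini G = ⊥) :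
    frattini (↥U) = ⊥ := by
  by_contra hne
  set F : Subgroup G := (frattini ↥U).map U.subtype with hF
  have hFle : F ≤ U := Subgroup.map_subtype_le _
  haveI := hU
  have hFnormal : F.Normal := by
    constructor
    intro n hn g
    obtain ⟨n₀, hn₀, rfl⟩ := hn
    have hgn : g * (n₀ : G) * g⁻¹ ∈ U := hU.conj_mem _ n₀.2 g
    have key : (⟨g * (n₀ : G) * g⁻¹, hgn⟩ : ↥U) ∈ frattini ↥U := by
      have hchar := Subgroup.characteristic_iff_comap_eq.1
        (frattini_characteristic (G := ↥U)) (MulAut.conjNormal g⁻¹ : MulAut ↥U)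
      rw [← hchar, Subgroup.mem_comap]
      have heq : ((MulAut.conjNormal g⁻¹ : MulAut ↥U) ⟨g * (n₀ : G) * g⁻¹, hgn⟩) = n₀ := by
        apply Subtype.ext
        rw [MulAut.conjNormal_apply]
        group
      rw [MulEquiv.coe_toMonoidHom, heq]
      exact hn₀
    exact ⟨_, key, rfl⟩
  have hFbot : F ≠ ⊥ := by
    intro h
    rw [hF, Subgroup.map_eq_bot_iff, Subgroup.ker_subtype, le_bot_iff] at h
    exact hne h
  have : ¬ F ≤ frattini G := by rw [hG]; exact fun h => hFbot (le_bot_iff.1 h)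
  obtain ⟨V, hV, hFV⟩ := exists_coatom_not_le this
  have hsupV : V ⊔ F = ⊤ := by
    apply hV.2
    exact lt_of_le_of_ne le_sup_left fun h => hFV (h ▸ le_sup_right)
  -- every element of U is in (comap U.subtype V) ⊔ frattini ↥U
  have hW : Subgroup.comap U.subtype V ⊔ frattini ↥U = ⊤ := by
    rw [eq_top_iff]
    intro u _
    have hu : (u : G) ∈ ((V ⊔ F : Subgroup G) : Set G) := by rw [hsupV]; exact Subgroup.mem_top _
    rw [Subgroup.mul_normal V F] at hu
    obtain ⟨v, hv, f, hf, huv⟩ := hu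
    obtain ⟨f₀, hf₀, rfl⟩ := hf
    have h7 : v * (f₀ : G) = (u : G) := huv
    have hvU : v ∈ U := by
      have hveq : v = (u : G) * (f₀ : G)⁻¹ := by
        rw [← h7]; simp [mul_assoc]
      rw [hveq]; exact mul_mem u.2 (inv_mem f₀.2)
    have hu_eq : u = (⟨v, hvU⟩ : ↥U) * f₀ := by
      apply Subtype.ext; exact h7.symm
    rw [hu_eq]
    exact mul_mem (Subgroup.mem_sup_left (by rwa [Subgroup.mem_comap]))
      (Subgroup.mem_sup_right hf₀)
  have := frattini_nongenerating hW
  have hUV : U ≤ V := by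
    intro u hu
    have : (⟨u, hu⟩ : ↥U) ∈ Subgroup.comap U.subtype V := this ▸ Subgroup.mem_top _
    rwa [Subgroup.mem_comap] at this
  exact hFV (hFle.trans hUV)

end Frat

universe u

section MainInduction

/-- Key induction: a finite group with trivial Frattini subgroup in which every
non-normal maximal subgroup contains the socle is nilpotent. -/
lemma nilpotent_of_socle_le_nonnormal_coatoms :
    ∀ (n : ℕ) (H : Type u) [Group H] [Finite H],
      Nat.card H ≤ n → frattini H = ⊥ →
      (∀ M : Subgroup H, IsCoatom M → ¬ M.Normal → socle' H ≤ M) →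
      Group.IsNilpotent H := by
  intro n
  induction n with
  | zero =>
    intro H _ _ hcard _ _
    exact absurd hcard (by have := Nat.card_pos (α := H); omega)
  | succ n ih =>
    intro H _ _ hcard hfrat hsoc
    by_cases htriv : Subsingleton H
    · refine ⟨0, ?_⟩
      rw [_root_.upperCentralSeries_zero, eq_top_iff]
      intro x _
      have : x = 1 := Subsingleton.elim x 1
      simp [this]
    · have hnt : Nontrivial H := not_subsingleton_iff_nontrivial.1 htriv
      obtain ⟨N, hN⟩ := exists_isMinimalNormal hnt
      haveI hNnormal : N.Normal := hN.1
      have hNfr : ¬ N ≤ frattini H := by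
        rw [hfrat, le_bot_iff]; exact hN.2.1
      obtain ⟨U, hUco, hNU⟩ := exists_coatom_not_le hNfr
      haveI hUnormal : U.Normal := by
        by_contra h
        exact hNU ((le_sSup (show N ∈ {K : Subgroup H | IsMinimalNormal K} from hN)).trans (hsoc U hUco h))
      have hsup : U ⊔ N = ⊤ :=
        hUco.2 _ (lt_of_le_of_ne le_sup_left fun h => hNU (h ▸ le_sup_right))
      have hinf : U ⊓ N = ⊥ := by
        rcases hN.2.2 (U ⊓ N) inferInstance inf_le_right with h | h
        · exact h
        · exact absurd (h ▸ inf_le_left : N ≤ U) hNU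
      have hcomm : ∀ u ∈ U, ∀ m ∈ N, Commute u m := fun u hu m hm =>
        Subgroup.commute_of_normal_of_disjoint U N hUnormal hNnormal
          (disjoint_iff.2 hinf) u m hu hm
      -- the quotient H ⧸ U has no nontrivial proper subgroups
      have hQsub : ∀ S : Subgroup (H ⧸ U), S = ⊥ ∨ S = ⊤ := by
        intro S
        have hUle : U ≤ S.comap (QuotientGroup.mk' U) := by
          intro u hu
          rw [Subgroup.mem_comap]
          have h1 : (QuotientGroup.mk' U) u = 1 := (QuotientGroup.eq_one_iff u).2 hu
          rw [h1]; exact S.one_mem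
        rcases eq_or_lt_of_le hUle with h | h
        · left
          rw [← Subgroup.map_comap_eq_self_of_surjective
            (QuotientGroup.mk'_surjective U) S, ← h, eq_bot_iff]
          rintro q ⟨x, hx, rfl⟩
          rw [Subgroup.mem_bot]
          exact (QuotientGroup.eq_one_iff x).2 hx
        · right
          rw [← Subgroup.map_comap_eq_self_of_surjective
            (QuotientGroup.mk'_surjective U) S, hUco.2 _ h]
          exact Subgroup.map_top_of_surjective _ (QuotientGroup.mk'_surjective U)
      have hQcomm : ∀ a b : H ⧸ U, a * b = b * a := by
        intro a b
        by_cases h1 : ∀ q : H ⧸ U, q = 1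
        · rw [h1 a, h1 b]
        · push_neg at h1
          obtain ⟨q, hq⟩ := h1
          have hqt : Subgroup.zpowers q = ⊤ := by
            rcases hQsub (Subgroup.zpowers q) with h | h
            · exact absurd (Subgroup.zpowers_eq_bot.1 h) hq
            · exact h
          obtain ⟨i, hi⟩ := Subgroup.mem_zpowers_iff.1 (hqt ▸ Subgroup.mem_top a)
          obtain ⟨j, hj⟩ := Subgroup.mem_zpowers_iff.1 (hqt ▸ Subgroup.mem_top b)
          rw [← hi, ← hj, ← zpow_add, ← zpow_add, add_comm]
      have hNcomm : ∀ a ∈ N, ∀ b ∈ N, a * b = b * a := by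
        intro a ha b hb
        have h2 := hQcomm ((QuotientGroup.mk' U) a) ((QuotientGroup.mk' U) b)
        rw [← map_mul, ← map_mul] at h2
        have h3 : (a * b : H ⧸ U) = (b * a : H) := h2
        have h4 : (b * a)⁻¹ * (a * b) ∈ U := QuotientGroup.eq.1 h3.symm
        have h5 : (b * a)⁻¹ * (a * b) ∈ N :=
          mul_mem (inv_mem (mul_mem hb ha)) (mul_mem ha hb)
        have h6 : (b * a)⁻¹ * (a * b) ∈ U ⊓ N := ⟨h4, h5⟩
        rw [hinf, Subgroup.mem_bot] at h6
        exact (inv_mul_eq_one.1 h6).symm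
      -- N is central
      have hcen : N ≤ Subgroup.center H := by
        intro m hm
        rw [Subgroup.mem_center_iff]
        intro g
        have hg : g ∈ ((U ⊔ N : Subgroup H) : Set H) := by
          rw [hsup]; exact Subgroup.mem_top g
        rw [Subgroup.mul_normal U N] at hg
        obtain ⟨u, hu, w, hw, rfl⟩ := hg
        have c1 : u * m = m * u := hcomm u hu m hm
        have c2 : w * m = m * w := hNcomm w hw m hm
        calc u * w * m = u * (w * m) := by rw [mul_assoc]
          _ = u * (m * w) := by rw [c2]
          _ = u * m * w := by rw [mul_assoc]
          _ = m * u * w := by rw [c1]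
          _ = m * (u * w) := by rw [mul_assoc]
      -- the cardinality of U is smaller
      have hUcard : Nat.card ↥U ≤ n := by
        have hle : Nat.card ↥U ≤ Nat.card H := Subgroup.card_le_card_group U
        have hne : Nat.card ↥U ≠ Nat.card H := by
          intro h
          exact hUco.1 (Subgroup.eq_top_of_card_eq U h)
        omega
      -- frattini of U is trivial
      have hUfrat : frattini ↥U = ⊥ := frattini_subgroup_eq_bot hUnormal hfrat
      -- the socle condition for U
      have hUsoc : ∀ K : Subgroup ↥U, IsCoatom K → ¬ K.Normal → socle' ↥U ≤ K := by
        intro K hKco hKnn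
        set K' : Subgroup H := K.map U.subtype with hK'def
        have hK'U : K' ≤ U := Subgroup.map_subtype_le _
        have hK'comap : K'.comap U.subtype = K :=
          Subgroup.comap_map_eq_self (by rw [Subgroup.ker_subtype]; exact bot_le)
        -- intersecting N ⊔ K' with U gives K'
        have hintersect : ∀ y : H, y ∈ U → y ∈ ((N : Set H) * (K' : Set H)) → y ∈ K' := by
          rintro y hyU ⟨w, hw, k, hk, rfl⟩
          have hwU : w ∈ U := by
            have : w = (w * k) * k⁻¹ := by group
            rw [this]
            exact mul_mem hyU (inv_mem (hK'U hk))
          have : w ∈ U ⊓ N := ⟨hwU, hw⟩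
          rw [hinf, Subgroup.mem_bot] at this
          rw [this]
          simpa using hk
        have hcoeNK : ((N ⊔ K' : Subgroup H) : Set H) = (N : Set H) * (K' : Set H) :=
          Subgroup.normal_mul N K'
        -- K'' = N ⊔ K' is a coatom of H
        have hK''ne : N ⊔ K' ≠ ⊤ := by
          intro h
          apply hKco.1
          rw [← hK'comap, eq_top_iff]
          intro u _
          rw [Subgroup.mem_comap]
          apply hintersect _ u.2
          rw [← hcoeNK, h]
          exact Subgroup.mem_top _
        have hK''co : IsCoatom (N ⊔ K') := by
          refine ⟨hK''ne, ?_⟩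
          intro L hL
          have hKW : K ≤ (U ⊓ L).comap U.subtype := by
            intro k hk
            have hkK' : (U.subtype k : H) ∈ K' := Subgroup.mem_map_of_mem _ hk
            rw [Subgroup.mem_comap]
            exact ⟨k.2, hL.le ((le_sup_right : K' ≤ N ⊔ K') hkK')⟩
          rcases eq_or_lt_of_le hKW with heq | hlt
          · exfalso
            apply hL.ne'
            apply le_antisymm ?_ hL.le
            intro l hl
            have hl2 : l ∈ ((N ⊔ U : Subgroup H) : Set H) := by
              rw [sup_comm U N] at hsup
              rw [hsup]; exact Subgroup.mem_top l
            rw [Subgroup.normal_mul N U] at hl2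
            obtain ⟨w, hw, u, hu, rfl⟩ := hl2
            have hwL : w ∈ L := hL.le ((le_sup_left : N ≤ N ⊔ K') hw)
            have huL : u ∈ L := by
              have : u = w⁻¹ * (w * u) := by group
              rw [this]; exact mul_mem (inv_mem hwL) hl
            have huW : (⟨u, hu⟩ : ↥U) ∈ (U ⊓ L).comap U.subtype := by
              rw [Subgroup.mem_comap]; exact ⟨hu, huL⟩
            rw [← heq] at huW
            have huK' : u ∈ K' := by
              have := Subgroup.mem_map_of_mem U.subtype huW
              rwa [hK'def]
            rw [← Subgroup.coe_mk U u hu] at huK'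
            show (w * u : H) ∈ N ⊔ K'
            exact mul_mem ((le_sup_left : N ≤ N ⊔ K') hw)
              ((le_sup_right : K' ≤ N ⊔ K') huK')
          · have hWtop : (U ⊓ L).comap U.subtype = ⊤ := hKco.2 _ hlt
            rw [eq_top_iff]
            intro g _
            have hUL : U ≤ L := by
              intro u hu
              have : (⟨u, hu⟩ : ↥U) ∈ (U ⊓ L).comap U.subtype := by
                rw [hWtop]; exact Subgroup.mem_top _
              rw [Subgroup.mem_comap] at this
              exact this.2
            have hNL : N ≤ L := (le_sup_left : N ≤ N ⊔ K').trans hL.le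
            have : (⊤ : Subgroup H) ≤ L := by
              rw [← hsup]; exact sup_le hUL hNL
            exact this (Subgroup.mem_top g)
        have hK''nn : ¬ (N ⊔ K').Normal := by
          intro hnor
          apply hKnn
          constructor
          intro k hk u
          have h2 : ((u : H) * (U.subtype k) * (u : H)⁻¹) ∈ N ⊔ K' :=
            hnor.conj_mem _ ((le_sup_right : K' ≤ N ⊔ K') (Subgroup.mem_map_of_mem _ hk)) (u : H)
          have h3 : ((u : H) * (U.subtype k) * (u : H)⁻¹) ∈ U :=
            mul_mem (mul_mem u.2 k.2) (inv_mem u.2)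
          have h4 : ((u : H) * (U.subtype k) * (u : H)⁻¹) ∈ K' := by
            apply hintersect _ h3
            rw [← hcoeNK]
            exact h2
          rw [← hK'comap, Subgroup.mem_comap]
          exact h4
        have hsocK'' : socle' H ≤ N ⊔ K' := hsoc _ hK''co hK''nn
        apply sSup_le
        intro W hW
        have hWmin : IsMinimalNormal W := hW
        haveI hWnormal : W.Normal := hWmin.1
        set W' : Subgroup H := W.map U.subtype with hW'def
        have hW'U : W' ≤ U := Subgroup.map_subtype_le _
        have hW'comap : W'.comap U.subtype = W :=
          Subgroup.comap_map_eq_self (by rw [Subgroup.ker_subtype]; exact bot_le)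
        have hW'norm : W'.Normal := by
          constructor
          rintro x ⟨x₀, hx₀, rfl⟩ g
          have hg : g ∈ ((N ⊔ U : Subgroup H) : Set H) := by
            rw [sup_comm U N] at hsup
            rw [hsup]; exact Subgroup.mem_top g
          rw [Subgroup.normal_mul N U] at hg
          obtain ⟨w, hw, u, hu, rfl⟩ := hg
          have hconjU : (u * (U.subtype x₀) * u⁻¹ : H) ∈ W' := by
            have : (⟨u, hu⟩ : ↥U) * x₀ * (⟨u, hu⟩ : ↥U)⁻¹ ∈ W :=
              hWnormal.conj_mem x₀ hx₀ ⟨u, hu⟩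
            exact Subgroup.mem_map_of_mem _ this
          have hyU : (u * (U.subtype x₀) * u⁻¹ : H) ∈ U := hW'U hconjU
          have hcomm2 : w * (u * (U.subtype x₀) * u⁻¹) = (u * (U.subtype x₀) * u⁻¹) * w :=
            (hcomm _ hyU _ hw).symm
          have : w * u * (U.subtype x₀) * (w * u)⁻¹ = u * (U.subtype x₀) * u⁻¹ := by
            rw [mul_inv_rev]
            calc w * u * (U.subtype x₀) * (u⁻¹ * w⁻¹)
                = w * (u * (U.subtype x₀) * u⁻¹) * w⁻¹ := by group
              _ = (u * (U.subtype x₀) * u⁻¹) * w * w⁻¹ := by rw [hcomm2]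
              _ = u * (U.subtype x₀) * u⁻¹ := by group
          rw [this]
          exact hconjU
        have hW'ne : W' ≠ ⊥ := by
          intro h
          rw [hW'def, Subgroup.map_eq_bot_iff, Subgroup.ker_subtype, le_bot_iff] at h
          exact hWmin.2.1 h
        have hW'min : IsMinimalNormal W' := by
          refine ⟨hW'norm, hW'ne, ?_⟩
          intro L hLnorm hLW'
          have hLU : L ≤ U := hLW'.trans hW'U
          have hL₀ : (L.comap U.subtype).Normal := hLnorm.comap U.subtype
          have hL₀W : L.comap U.subtype ≤ W := by
            rw [← hW'comap]; exact Subgroup.comap_mono hLW'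
          have hLmap : (L.comap U.subtype).map U.subtype = L := by
            rw [Subgroup.map_comap_eq, Subgroup.range_subtype, inf_eq_right.2 hLU]
          rcases hWmin.2.2 _ hL₀ hL₀W with h | h
          · left; rw [← hLmap, h]; exact Subgroup.map_bot _
          · right; rw [← hLmap, h]
        have hW'le : W' ≤ N ⊔ K' :=
          (le_sSup (show W' ∈ {K : Subgroup H | IsMinimalNormal K} from hW'min)).trans hsocK''
        intro w hw
        have h5 : (U.subtype w : H) ∈ K' := by
          apply hintersect _ w.2
          rw [← hcoeNK]
          exact hW'le (Subgroup.mem_map_of_mem _ hw)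
        rw [← hK'comap, Subgroup.mem_comap]
        exact h5
      have hUnil : Group.IsNilpotent ↥U := ih ↥U hUcard hUfrat hUsoc
      have hψ : Function.Surjective ((QuotientGroup.mk' N).comp U.subtype) := by
        intro q
        obtain ⟨g, rfl⟩ := QuotientGroup.mk'_surjective N q
        have hg : g ∈ ((U ⊔ N : Subgroup H) : Set H) := by
          rw [hsup]; exact Subgroup.mem_top g
        rw [Subgroup.mul_normal U N] at hg
        obtain ⟨u, hu, w, hw, rfl⟩ := hg
        refine ⟨⟨u, hu⟩, ?_⟩
        show QuotientGroup.mk' N u = QuotientGroup.mk' N (u * w)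
        have h1 : (QuotientGroup.mk' N) w = 1 := (QuotientGroup.eq_one_iff w).2 hw
        rw [map_mul, h1, mul_one]
      have hQnil : Group.IsNilpotent (H ⧸ N) := nilpotent_of_surjective _ hψ
      exact _root_.isNilpotent_of_ker_le_center (QuotientGroup.mk' N)
        (by rw [QuotientGroup.ker_mk']; exact hcen)

end MainInduction



end ExtraAux

theorem nilpotent_iff_maximal_ftilde_conjugate_permutable
    (G : Type*) [Group G] [Finite G] :
    Group.IsNilpotent G ↔
      ∀ M : Subgroup G, IsCoatom M → IsRCP (Ftilde G : Set G) M := by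
  have htfae : Group.IsNilpotent G ↔ ∀ H : Subgroup G, IsCoatom H → H.Normal :=
    (isNilpotent_of_finite_tfae (G := G)).out 0 2
  have htfaeQ : Group.IsNilpotent (G ⧸ frattini G) ↔
      ∀ H : Subgroup (G ⧸ frattini G), IsCoatom H → H.Normal :=
    (isNilpotent_of_finite_tfae (G := G ⧸ frattini G)).out 0 2
  constructor
  · intro hnil M hM x hx
    have hMn : M.Normal := htfae.1 hnil M hM
    rw [conjS_normal hMn]
  · intro hyp
    have key : ∀ M : Subgroup G, IsCoatom M → ¬ M.Normal → Ftilde G ≤ M := by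
      intro M hM hnn x hx
      exact mem_of_permutable hM hnn (hyp M hM x hx)
    have hfratQ : frattini (G ⧸ frattini G) = ⊥ := frattini_quotient_frattini
    have hsocQ : ∀ S : Subgroup (G ⧸ frattini G), IsCoatom S → ¬ S.Normal →
        socle' (G ⧸ frattini G) ≤ S := by
      intro S hS hSnn
      have hMco : IsCoatom (S.comap (QuotientGroup.mk' (frattini G))) :=
        Subgroup.isCoatom_comap_of_surjective (QuotientGroup.mk'_surjective _) hS
      have hMnn : ¬ (S.comap (QuotientGroup.mk' (frattini G))).Normal := by
        intro h
        apply hSnn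
        have h2 := h.map (QuotientGroup.mk' (frattini G)) (QuotientGroup.mk'_surjective _)
        rwa [Subgroup.map_comap_eq_self_of_surjective (QuotientGroup.mk'_surjective _)] at h2
      have hle : Ftilde G ≤ S.comap (QuotientGroup.mk' (frattini G)) := key _ hMco hMnn
      have h3 := Subgroup.map_mono (f := QuotientGroup.mk' (frattini G)) hle
      rwa [show Ftilde G = (socle' (G ⧸ frattini G)).comap (QuotientGroup.mk' (frattini G))
          from rfl,
        Subgroup.map_comap_eq_self_of_surjective (QuotientGroup.mk'_surjective _),
        Subgroup.map_comap_eq_self_of_surjective (QuotientGroup.mk'_surjective _)] at h3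
    have hQnil : Group.IsNilpotent (G ⧸ frattini G) :=
      nilpotent_of_socle_le_nonnormal_coatoms (Nat.card (G ⧸ frattini G)) _ le_rfl hfratQ hsocQ
    rw [htfae]
    intro M hM
    have hker : (QuotientGroup.mk' (frattini G)).ker ≤ M := by
      rw [QuotientGroup.ker_mk']; exact frattini_le_coatom hM
    have hMQ : IsCoatom (M.map (QuotientGroup.mk' (frattini G))) :=
      isCoatom_map_of_surjective (QuotientGroup.mk'_surjective _) hM hker
    have hnorm : (M.map (QuotientGroup.mk' (frattini G))).Normal :=
      htfaeQ.1 hQnil _ hMQ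
    have h4 := hnorm.comap (QuotientGroup.mk' (frattini G))
    rwa [Subgroup.comap_map_eq_self hker] at h4
end

section
/- A finite group G is nilpotent if and only if the normalizer N_G(P) of every Sylow subgroup P of G contains F*(G). -/
open scoped Pointwise

set_option linter.unusedSectionVars false

open scoped commutatorElement

section Aux1

variable {G : Type*} [Group G]

theorem centralizer_normal_of_normal (N : Subgroup G) (hN : N.Normal) :
    (Subgroup.centralizer (N : Set G)).Normal := by
  constructor
  intro c hc g
  rw [Subgroup.mem_centralizer_iff] at hc ⊢
  intro h hh
  have h1 : g⁻¹ * h * g ∈ N := by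
    have := hN.conj_mem h hh g⁻¹
    simpa [mul_assoc] using this
  have h2 := hc _ h1
  calc h * (g * c * g⁻¹) = g * ((g⁻¹ * h * g) * c) * g⁻¹ := by group
    _ = g * (c * (g⁻¹ * h * g)) * g⁻¹ := by rw [h2]
    _ = g * c * g⁻¹ * h := by group

theorem exists_isMinimalNormal_s4 (K : Type*) [Group K] [Finite K] [Nontrivial K] :
    ∃ N : Subgroup K, IsMinimalNormal N := by
  classical
  have hwf : WellFounded ((· < ·) : Subgroup K → Subgroup K → Prop) := wellFounded_lt
  have htb : (⊤ : Subgroup K) ≠ ⊥ := by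
    obtain ⟨x, hx⟩ := exists_ne (1 : K)
    intro h
    exact hx (Subgroup.mem_bot.mp (h ▸ Subgroup.mem_top x))
  obtain ⟨N, hN, hmin⟩ := hwf.has_min {N : Subgroup K | N.Normal ∧ N ≠ ⊥}
    ⟨⊤, inferInstance, htb⟩
  refine ⟨N, hN.1, hN.2, fun K' hK'n hK'le => ?_⟩
  by_cases hb : K' = ⊥
  · exact Or.inl hb
  · exact Or.inr ((hK'le.lt_or_eq).resolve_left (hmin K' ⟨hK'n, hb⟩))

theorem map_map_symm {K K' : Type*} [Group K] [Group K'] (e : K ≃* K') (N : Subgroup K') :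
    (N.map e.symm.toMonoidHom).map e.toMonoidHom = N := by
  rw [Subgroup.map_map]
  have h : e.toMonoidHom.comp e.symm.toMonoidHom = MonoidHom.id K' := by
    ext x; simp
  rw [h, Subgroup.map_id]

theorem map_symm_map {K K' : Type*} [Group K] [Group K'] (e : K ≃* K') (N : Subgroup K) :
    (N.map e.toMonoidHom).map e.symm.toMonoidHom = N := by
  have := map_map_symm e.symm N
  rwa [MulEquiv.symm_symm] at this

theorem isMinimalNormal_map {K K' : Type*} [Group K] [Group K'] (e : K ≃* K')
    {N : Subgroup K} (h : IsMinimalNormal N) : IsMinimalNormal (N.map e.toMonoidHom) := by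
  obtain ⟨hn, hb, hmin⟩ := h
  refine ⟨hn.map e.toMonoidHom e.surjective, ?_, ?_⟩
  · intro hcontra
    apply hb
    have := congrArg (Subgroup.map e.symm.toMonoidHom) hcontra
    rwa [map_symm_map, Subgroup.map_bot] at this
  · intro K₁ hK₁n hK₁le
    have hle : K₁.map e.symm.toMonoidHom ≤ N := by
      have := Subgroup.map_mono (f := e.symm.toMonoidHom) hK₁le
      rwa [map_symm_map] at this
    rcases hmin _ (hK₁n.map e.symm.toMonoidHom e.symm.surjective) hle with h1 | h1
    · left
      have := congrArg (Subgroup.map e.toMonoidHom) h1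
      rwa [map_map_symm, Subgroup.map_bot] at this
    · right
      have := congrArg (Subgroup.map e.toMonoidHom) h1
      rwa [map_map_symm] at this

theorem socle'_map_le {K K' : Type*} [Group K] [Group K'] (e : K ≃* K') :
    (socle' K).map e.toMonoidHom ≤ socle' K' := by
  unfold socle'
  rw [sSup_eq_iSup, Subgroup.map_iSup]
  refine iSup_le fun N => ?_
  rw [Subgroup.map_iSup]
  exact iSup_le fun hN => le_sSup (isMinimalNormal_map e hN)

theorem socle'_map {K K' : Type*} [Group K] [Group K'] (e : K ≃* K') :
    (socle' K).map e.toMonoidHom = socle' K' := by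
  refine le_antisymm (socle'_map_le e) ?_
  have h2 := socle'_map_le e.symm
  have h3 := Subgroup.map_mono (f := e.toMonoidHom) h2
  rwa [map_map_symm] at h3

end Aux1


section Aux2
variable {G : Type*} [Group G]

instance FStar_normal (G : Type*) [Group G] : (FStar G).Normal := by
  haveI hFn : (Fitting G).Normal := Fitting_normal G
  haveI hcn : (Subgroup.centralizer ((Fitting G : Subgroup G) : Set G)).Normal :=
    centralizer_normal_of_normal _ hFn
  haveI hBn : (Subgroup.centralizer ((Fitting G : Subgroup G) : Set G) ⊔ Fitting G).Normal :=
    Subgroup.sup_normal _ _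
  haveI hHn : ((Subgroup.centralizer ((Fitting G : Subgroup G) : Set G) ⊔ Fitting G).map
      (QuotientGroup.mk' (Fitting G))).Normal :=
    Subgroup.Normal.map hBn _ (QuotientGroup.mk'_surjective _)
  have hSn : (Subgroup.map
      ((Subgroup.centralizer (Fitting G : Set G) ⊔ Fitting G).map
          (QuotientGroup.mk' (Fitting G))).subtype
      (socle' ((Subgroup.centralizer (Fitting G : Set G) ⊔ Fitting G).map
          (QuotientGroup.mk' (Fitting G))))).Normal := by
    constructor
    intro n hn g
    obtain ⟨m, hm, rfl⟩ := hn
    refine ⟨(MulAut.conjNormal g) m, ?_, ?_⟩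
    · have key := socle'_map (MulAut.conjNormal g :
        MulAut ((Subgroup.centralizer (Fitting G : Set G) ⊔ Fitting G).map
          (QuotientGroup.mk' (Fitting G))))
      rw [← key]
      exact Subgroup.mem_map_of_mem _ hm
    · exact (MulAut.conjNormal_apply g m).symm ▸ rfl
  exact Subgroup.Normal.comap hSn _

theorem Fitting_le_FStar (G : Type*) [Group G] : Fitting G ≤ FStar G := by
  intro x hx
  have hker : x ∈ (QuotientGroup.mk' (Fitting G)).ker := by
    rw [QuotientGroup.ker_mk']; exact hx
  show x ∈ Subgroup.comap _ _
  rw [Subgroup.mem_comap, MonoidHom.mem_ker.mp hker]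
  exact Subgroup.one_mem _

theorem centralizer_Fitting_le (G : Type*) [Group G] [Finite G] (hFD : FStar G = Fitting G) :
    Subgroup.centralizer ((Fitting G : Subgroup G) : Set G) ≤ Fitting G := by
  have h1 : Subgroup.map (QuotientGroup.mk' (Fitting G)) (FStar G) =
      (Subgroup.map
      ((Subgroup.centralizer (Fitting G : Set G) ⊔ Fitting G).map
          (QuotientGroup.mk' (Fitting G))).subtype
      (socle' ((Subgroup.centralizer (Fitting G : Set G) ⊔ Fitting G).map
          (QuotientGroup.mk' (Fitting G))))) :=
    Subgroup.map_comap_eq_self_of_surjective (QuotientGroup.mk'_surjective _) _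
  have h2 : Subgroup.map (QuotientGroup.mk' (Fitting G)) (Fitting G) = ⊥ :=
    (Subgroup.map_eq_bot_iff _).mpr (by rw [QuotientGroup.ker_mk'])
  rw [hFD, h2] at h1
  have hsoc : socle' ((Subgroup.centralizer (Fitting G : Set G) ⊔ Fitting G).map
      (QuotientGroup.mk' (Fitting G))) = ⊥ := by
    have h3 := h1.symm
    rw [Subgroup.map_eq_bot_iff] at h3
    rw [Subgroup.ker_subtype] at h3
    exact le_bot_iff.mp h3
  have hHbot : (Subgroup.centralizer (Fitting G : Set G) ⊔ Fitting G).map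
      (QuotientGroup.mk' (Fitting G)) = ⊥ := by
    by_contra hne
    haveI : Nontrivial ((Subgroup.centralizer (Fitting G : Set G) ⊔ Fitting G).map
        (QuotientGroup.mk' (Fitting G))) :=
      (Subgroup.nontrivial_iff_ne_bot _).mpr hne
    obtain ⟨N, hN⟩ := exists_isMinimalNormal_s4
      ((Subgroup.centralizer (Fitting G : Set G) ⊔ Fitting G).map
        (QuotientGroup.mk' (Fitting G)))
    have : N ≤ socle' _ := le_sSup hN
    rw [hsoc, le_bot_iff] at this
    exact hN.2.1 this
  have hle : Subgroup.centralizer (Fitting G : Set G) ⊔ Fitting G ≤ Fitting G := by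
    have := (Subgroup.map_eq_bot_iff _).mp hHbot
    rwa [QuotientGroup.ker_mk'] at this
  exact le_sup_left.trans hle

end Aux2


section Aux3

variable {G : Type*} [Group G]

theorem primary_split [Finite G] (x : G) {p : ℕ} (hp : p.Prime) :
    ∃ y z : G, y ∈ Subgroup.zpowers x ∧ z ∈ Subgroup.zpowers x ∧ x = y * z ∧
      y ^ p ^ ((orderOf x).factorization p) = 1 ∧ orderOf z ∣ ordCompl[p] (orderOf x) := by
  have hn : orderOf x ≠ 0 := (orderOf_pos x).ne'
  set n := orderOf x with hndef
  set a := n.factorization p with hadef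
  set m := n / p ^ a with hmdef
  have hxn : x ^ ((n : ℤ)) = 1 := by
    rw [zpow_natCast]; exact pow_orderOf_eq_one x
  have hnm : p ^ a * m = n := Nat.ordProj_mul_ordCompl_eq_self n p
  have hco : Nat.Coprime (p ^ a) m := Nat.Coprime.pow_left _ (Nat.coprime_ordCompl hp hn)
  have hiso : IsCoprime ((p ^ a : ℕ) : ℤ) ((m : ℕ) : ℤ) := Nat.isCoprime_iff_coprime.mpr hco
  obtain ⟨u, v, huv⟩ := hiso
  refine ⟨x ^ (v * (m : ℤ)), x ^ (u * ((p ^ a : ℕ) : ℤ)),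
    Subgroup.zpow_mem _ (Subgroup.mem_zpowers x) _,
    Subgroup.zpow_mem _ (Subgroup.mem_zpowers x) _, ?_, ?_, ?_⟩
  · rw [← zpow_add]
    have h1 : v * (m : ℤ) + u * ((p ^ a : ℕ) : ℤ) = 1 := by linarith [huv]
    rw [h1, zpow_one]
  · rw [← zpow_natCast (x ^ (v * (m : ℤ))), ← zpow_mul]
    have h2 : v * (m : ℤ) * ((p ^ a : ℕ) : ℤ) = (n : ℤ) * v := by
      have : ((p ^ a : ℕ) : ℤ) * (m : ℤ) = (n : ℤ) := by exact_mod_cast congrArg (Nat.cast : ℕ → ℤ) hnm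
      calc v * (m : ℤ) * ((p ^ a : ℕ) : ℤ) = ((p ^ a : ℕ) : ℤ) * (m : ℤ) * v := by ring
        _ = (n : ℤ) * v := by rw [this]
    rw [h2, zpow_mul, hxn, one_zpow]
  · apply orderOf_dvd_of_pow_eq_one
    rw [← zpow_natCast (x ^ (u * ((p ^ a : ℕ) : ℤ))), ← zpow_mul]
    have h3 : u * ((p ^ a : ℕ) : ℤ) * ((m : ℕ) : ℤ) = (n : ℤ) * u := by
      have : ((p ^ a : ℕ) : ℤ) * (m : ℤ) = (n : ℤ) := by exact_mod_cast congrArg (Nat.cast : ℕ → ℤ) hnm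
      calc u * ((p ^ a : ℕ) : ℤ) * ((m : ℕ) : ℤ) = ((p ^ a : ℕ) : ℤ) * (m : ℤ) * u := by ring
        _ = (n : ℤ) * u := by rw [this]
    rw [h3, zpow_mul, hxn, one_zpow]

theorem ordCompl_lt_self {n r : ℕ} (hr : r.Prime) (hn : n ≠ 0) (hdvd : r ∣ n) :
    ordCompl[r] n < n := by
  have h1 : ordCompl[r] n ∣ n := Nat.ordCompl_dvd n r
  have h2 : ordCompl[r] n ≠ n := fun hEq => Nat.not_dvd_ordCompl hr hn (by rw [hEq]; exact hdvd)
  exact lt_of_le_of_ne (Nat.le_of_dvd (Nat.pos_of_ne_zero hn) h1) h2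

theorem le_of_primary_mem [Finite G] (H T : Subgroup G)
    (h : ∀ r : ℕ, r.Prime → ∀ y ∈ H, (∃ k : ℕ, y ^ r ^ k = 1) → y ∈ T) : H ≤ T := by
  intro x hx
  have main : ∀ n : ℕ, ∀ x : G, orderOf x = n → x ∈ H → x ∈ T := by
    intro n
    induction n using Nat.strong_induction_on with
    | _ n ih =>
      intro x hord hxH
      by_cases h1 : n = 1
      · have hx1 : x = 1 := orderOf_eq_one_iff.mp (by rw [hord, h1])
        rw [hx1]; exact T.one_mem
      have hn0 : n ≠ 0 := by rw [← hord]; exact (orderOf_pos x).ne'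
      have hr : n.minFac.Prime := Nat.minFac_prime h1
      obtain ⟨y, z, hy, hz, hxyz, hyk, hzd⟩ := primary_split x hr
      have hyH : y ∈ H := Subgroup.zpowers_le.mpr hxH hy
      have hzH : z ∈ H := Subgroup.zpowers_le.mpr hxH hz
      have hyT : y ∈ T := h n.minFac hr y hyH ⟨_, hyk⟩
      have hordz : orderOf z < n := by
        have h2 : ordCompl[n.minFac] n < n := ordCompl_lt_self hr hn0 (Nat.minFac_dvd n)
        have h3 : orderOf z ≤ ordCompl[n.minFac] n :=
          Nat.le_of_dvd (Nat.ordCompl_pos _ hn0) (hord ▸ hzd)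
        omega
      have hzT : z ∈ T := ih (orderOf z) hordz z rfl hzH
      rw [hxyz]; exact T.mul_mem hyT hzT
  exact main (orderOf x) x rfl hx

theorem mem_of_coprime_order [Finite G] (T : Subgroup G) (q : ℕ)
    (h : ∀ r : ℕ, r.Prime → r ≠ q → ∀ y : G, (∃ k : ℕ, y ^ r ^ k = 1) → y ∈ T) :
    ∀ x : G, ¬ q ∣ orderOf x → x ∈ T := by
  have main : ∀ n : ℕ, ∀ x : G, orderOf x = n → ¬ q ∣ n → x ∈ T := by
    intro n
    induction n using Nat.strong_induction_on with
    | _ n ih =>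
      intro x hord hq
      by_cases h1 : n = 1
      · have hx1 : x = 1 := orderOf_eq_one_iff.mp (by rw [hord, h1])
        rw [hx1]; exact T.one_mem
      have hn0 : n ≠ 0 := by rw [← hord]; exact (orderOf_pos x).ne'
      have hr : n.minFac.Prime := Nat.minFac_prime h1
      have hrq : n.minFac ≠ q := fun hEq => hq (hEq ▸ Nat.minFac_dvd n)
      obtain ⟨y, z, hy, hz, hxyz, hyk, hzd⟩ := primary_split x hr
      have hyT : y ∈ T := h n.minFac hr hrq y ⟨_, hyk⟩
      have hzq : ¬ q ∣ orderOf z := by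
        intro hc
        exact hq (hc.trans ((hord ▸ hzd).trans (Nat.ordCompl_dvd n n.minFac)))
      have hordz : orderOf z < n := by
        have h2 : ordCompl[n.minFac] n < n := ordCompl_lt_self hr hn0 (Nat.minFac_dvd n)
        have h3 : orderOf z ≤ ordCompl[n.minFac] n :=
          Nat.le_of_dvd (Nat.ordCompl_pos _ hn0) (hord ▸ hzd)
        omega
      have hzT : z ∈ T := ih (orderOf z) hordz z rfl hzq
      rw [hxyz]; exact T.mul_mem hyT hzT
  exact fun x hx => main (orderOf x) x rfl hx

def iterComm (N : Subgroup G) : ℕ → Subgroup G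
  | 0 => N
  | (k+1) => ⁅iterComm N k, (⊤ : Subgroup G)⁆

theorem iterComm_normal {N : Subgroup G} (hN : N.Normal) : ∀ k, (iterComm N k).Normal
  | 0 => hN
  | (k+1) => by
    haveI := iterComm_normal hN k
    show (⁅iterComm N k, (⊤ : Subgroup G)⁆).Normal
    infer_instance

theorem iterComm_succ_le {N : Subgroup G} (hN : N.Normal) (k : ℕ) :
    iterComm N (k+1) ≤ iterComm N k := by
  haveI := iterComm_normal hN k
  exact Subgroup.commutator_le_left _ _

theorem iterComm_le_base {N : Subgroup G} (hN : N.Normal) : ∀ k, iterComm N k ≤ N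
  | 0 => le_rfl
  | (k+1) => (iterComm_succ_le hN k).trans (iterComm_le_base hN k)

theorem iterComm_shift (N : Subgroup G) :
    ∀ k, iterComm N (k+1) = iterComm ⁅N, (⊤ : Subgroup G)⁆ k
  | 0 => rfl
  | (k+1) => by
    show ⁅iterComm N (k+1), ⊤⁆ = ⁅iterComm ⁅N, ⊤⁆ k, ⊤⁆
    rw [iterComm_shift N k]

theorem le_ucs_of_iterComm_eq_bot :
    ∀ (k : ℕ) (N : Subgroup G), iterComm N k = ⊥ → N ≤ Subgroup.upperCentralSeries G k
  | 0, N, h => by rw [Subgroup.upperCentralSeries_zero]; exact h.le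
  | (k+1), N, h => by
    rw [iterComm_shift] at h
    have h2 := le_ucs_of_iterComm_eq_bot k _ h
    intro x hx
    rw [Subgroup.mem_upperCentralSeries_succ_iff]
    intro y
    have : ⁅x, y⁆ ∈ Subgroup.upperCentralSeries G k :=
      h2 (Subgroup.commutator_mem_commutator hx (Subgroup.mem_top y))
    rwa [commutatorElement_def] at this

theorem commutator_commutator_le_of_rotate {H K L M : Subgroup G} (hM : M.Normal)
    (h1 : ⁅⁅K, L⁆, H⁆ ≤ M) (h2 : ⁅⁅L, H⁆, K⁆ ≤ M) : ⁅⁅H, K⁆, L⁆ ≤ M := by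
  haveI := hM
  have e1 : ∀ A B : Subgroup G, Subgroup.map (QuotientGroup.mk' M) ⁅A, B⁆
      = ⁅Subgroup.map (QuotientGroup.mk' M) A, Subgroup.map (QuotientGroup.mk' M) B⁆ :=
    fun A B => Subgroup.map_commutator A B _
  have f1 : ⁅⁅Subgroup.map (QuotientGroup.mk' M) K, Subgroup.map (QuotientGroup.mk' M) L⁆,
      Subgroup.map (QuotientGroup.mk' M) H⁆ = ⊥ := by
    rw [← e1, ← e1]
    exact (Subgroup.map_eq_bot_iff _).mpr (h1.trans (QuotientGroup.ker_mk' M).ge)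
  have f2 : ⁅⁅Subgroup.map (QuotientGroup.mk' M) L, Subgroup.map (QuotientGroup.mk' M) H⁆,
      Subgroup.map (QuotientGroup.mk' M) K⁆ = ⊥ := by
    rw [← e1, ← e1]
    exact (Subgroup.map_eq_bot_iff _).mpr (h2.trans (QuotientGroup.ker_mk' M).ge)
  have f3 := Subgroup.commutator_commutator_eq_bot_of_rotate f1 f2
  rw [← e1, ← e1] at f3
  have f4 := (Subgroup.map_eq_bot_iff _).mp (le_bot_iff.mp f3.le)
  rwa [QuotientGroup.ker_mk'] at f4

theorem top_ucs_le (G : Type*) [Group G] :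
    ∀ i, ⁅(⊤ : Subgroup G), Subgroup.upperCentralSeries G i⁆ ≤ Subgroup.upperCentralSeries G (i - 1)
  | 0 => by
    simp
  | (i+1) => by
    rw [Subgroup.commutator_comm, Subgroup.commutator_le]
    intro g1 hg1 g2 _
    have := Subgroup.mem_upperCentralSeries_succ_iff.mp hg1 g2
    show ⁅g1, g2⁆ ∈ Subgroup.upperCentralSeries G (i + 1 - 1)
    rw [commutatorElement_def]
    simpa [commutatorElement_def] using this

theorem lcs_ucs_le (G : Type*) [Group G] : ∀ (j i : ℕ),
    ⁅Subgroup.lowerCentralSeries (⊤ : Subgroup G) j, Subgroup.upperCentralSeries G i⁆ ≤ Subgroup.upperCentralSeries G (i - (j+1)) := by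
  intro j
  induction j with
  | zero =>
    intro i
    rw [Subgroup.lowerCentralSeries_zero]
    simpa using top_ucs_le G i
  | succ j ihj =>
    intro i
    have e : Subgroup.lowerCentralSeries (⊤ : Subgroup G) (j+1) = ⁅Subgroup.lowerCentralSeries (⊤ : Subgroup G) j, ⊤⁆ := rfl
    rw [e]
    apply commutator_commutator_le_of_rotate (M := Subgroup.upperCentralSeries G (i - (j+1+1))) inferInstance
    · calc ⁅⁅(⊤ : Subgroup G), Subgroup.upperCentralSeries G i⁆, Subgroup.lowerCentralSeries (⊤ : Subgroup G) j⁆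
          ≤ ⁅Subgroup.upperCentralSeries G (i-1), Subgroup.lowerCentralSeries (⊤ : Subgroup G) j⁆ :=
            Subgroup.commutator_mono (top_ucs_le G i) le_rfl
        _ = ⁅Subgroup.lowerCentralSeries (⊤ : Subgroup G) j, Subgroup.upperCentralSeries G (i-1)⁆ :=
            Subgroup.commutator_comm _ _
        _ ≤ Subgroup.upperCentralSeries G ((i-1) - (j+1)) := ihj (i-1)
        _ = Subgroup.upperCentralSeries G (i - (j+1+1)) := by
            have hidx : (i-1) - (j+1) = i - (j+1+1) := by omega
            rw [hidx]
    · calc ⁅⁅Subgroup.upperCentralSeries G i, Subgroup.lowerCentralSeries (⊤ : Subgroup G) j⁆, (⊤ : Subgroup G)⁆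
          = ⁅⁅Subgroup.lowerCentralSeries (⊤ : Subgroup G) j, Subgroup.upperCentralSeries G i⁆, (⊤ : Subgroup G)⁆ := by
            rw [Subgroup.commutator_comm (Subgroup.upperCentralSeries G i)]
        _ ≤ ⁅Subgroup.upperCentralSeries G (i - (j+1)), (⊤ : Subgroup G)⁆ :=
            Subgroup.commutator_mono (ihj i) le_rfl
        _ = ⁅(⊤ : Subgroup G), Subgroup.upperCentralSeries G (i - (j+1))⁆ :=
            Subgroup.commutator_comm _ _
        _ ≤ Subgroup.upperCentralSeries G ((i - (j+1)) - 1) := top_ucs_le G _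
        _ = Subgroup.upperCentralSeries G (i - (j+1+1)) := by
            have hidx : (i - (j+1)) - 1 = i - (j+1+1) := by omega
            rw [hidx]

theorem exists_ucs_stable (G : Type*) [Group G] [Finite G] :
    ∃ K : ℕ, ∀ k, Subgroup.upperCentralSeries G k ≤ Subgroup.upperCentralSeries G K := by
  have hfin : (Set.range (fun k => Subgroup.upperCentralSeries G k)).Finite := Set.toFinite _
  obtain ⟨A, hA, hmax⟩ := Set.Finite.exists_maximalFor id _ hfin ⟨_, ⟨0, rfl⟩⟩
  obtain ⟨K, rfl⟩ := hA
  refine ⟨K, fun k => ?_⟩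
  rcases le_total k K with h | h
  · exact Subgroup.upperCentralSeries_mono G h
  · have h2 := Subgroup.upperCentralSeries_mono G h
    have h3 := hmax ⟨k, rfl⟩ h2
    simp only [id] at h3
    exact h3

theorem le_ucs_of_pgroup_action [Finite G] {p : ℕ} (hp : p.Prime)
    (N : Subgroup G) (hN : N.Normal) (hNp : IsPGroup p N)
    (hquot : ∀ g : G, ∃ k : ℕ, g ^ p ^ k ∈ Subgroup.centralizer (N : Set G)) :
    ∃ k, N ≤ Subgroup.upperCentralSeries G k := by
  haveI hpfact : Fact p.Prime := ⟨hp⟩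
  haveI hCn : (Subgroup.centralizer (N : Set G)).Normal := centralizer_normal_of_normal N hN
  set C := Subgroup.centralizer (N : Set G) with hC
  have hqp : IsPGroup p (G ⧸ C) := by
    intro g'
    obtain ⟨g, rfl⟩ := QuotientGroup.mk'_surjective C g'
    obtain ⟨k, hk⟩ := hquot g
    exact ⟨k, by rw [← map_pow]; exact (QuotientGroup.eq_one_iff _).mpr hk⟩
  have hnil : Group.IsNilpotent (G ⧸ C) := hqp.isNilpotent
  obtain ⟨k, hk⟩ := nilpotent_iff_lowerCentralSeries.mp hnil
  obtain ⟨P, hNP⟩ := hNp.exists_le_sylow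
  have hPC : (P : Subgroup G) ⊔ C = ⊤ := by
    have h1 : ((P : Subgroup G) ⊔ C).index ∣ C.index := Subgroup.index_dvd_of_le le_sup_right
    have h2 : ((P : Subgroup G) ⊔ C).index ∣ (P : Subgroup G).index :=
      Subgroup.index_dvd_of_le le_sup_left
    have h3 : ¬ p ∣ (P : Subgroup G).index := P.not_dvd_index
    obtain ⟨nn, hnn⟩ := hqp.exists_card_eq
    have h4 : C.index = p ^ nn := by rw [Subgroup.index_eq_card, hnn]
    have h5 : ((P : Subgroup G) ⊔ C).index ∣ p ^ nn := h4 ▸ h1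
    obtain ⟨j, hj1, hj2⟩ := (Nat.dvd_prime_pow hp).mp h5
    have hj0 : j = 0 := by
      by_contra hj
      exact h3 (dvd_trans (hj2 ▸ dvd_pow_self p hj) h2)
    rw [hj0, pow_zero] at hj2
    exact Subgroup.index_eq_one.mp hj2
  have hmapb : ∀ i, Subgroup.map (QuotientGroup.mk' C) (iterComm N i)
      ≤ Subgroup.lowerCentralSeries (⊤ : Subgroup (G ⧸ C)) i := by
    intro i
    induction i with
    | zero => exact le_top
    | succ i ihi =>
      have e1 : iterComm N (i+1) = ⁅iterComm N i, ⊤⁆ := rfl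
      have e2 : Subgroup.lowerCentralSeries (⊤ : Subgroup (G ⧸ C)) (i+1) = ⁅Subgroup.lowerCentralSeries (⊤ : Subgroup (G ⧸ C)) i, ⊤⁆ := rfl
      rw [e1, Subgroup.map_commutator, e2]
      exact Subgroup.commutator_mono ihi le_top
  have hNC : iterComm N k ≤ C := by
    have h6 : Subgroup.map (QuotientGroup.mk' C) (iterComm N k) = ⊥ :=
      le_bot_iff.mp (hk ▸ hmapb k)
    have h7 := (Subgroup.map_eq_bot_iff _).mp h6
    rwa [QuotientGroup.ker_mk'] at h7
  have hP2 : ∀ j, iterComm N (k + j)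
      ≤ Subgroup.map (P : Subgroup G).subtype (Subgroup.lowerCentralSeries (⊤ : Subgroup ↥(P : Subgroup G)) j) := by
    intro j
    induction j with
    | zero =>
      have hmt : Subgroup.map (P : Subgroup G).subtype
          (Subgroup.lowerCentralSeries (⊤ : Subgroup ↥(P : Subgroup G)) 0) = (P : Subgroup G) := by
        rw [Subgroup.lowerCentralSeries_zero, ← MonoidHom.range_eq_map, Subgroup.range_subtype]
      rw [Nat.add_zero, hmt]
      exact (iterComm_le_base hN k).trans hNP
    | succ j ihj =>
      have hstep : iterComm N (k+(j+1)) = ⁅iterComm N (k+j), ⊤⁆ := rfl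
      rw [hstep]
      have hmapc : Subgroup.map (P : Subgroup G).subtype
          (Subgroup.lowerCentralSeries (⊤ : Subgroup ↥(P : Subgroup G)) (j+1))
          = ⁅Subgroup.map (P : Subgroup G).subtype (Subgroup.lowerCentralSeries (⊤ : Subgroup ↥(P : Subgroup G)) j),
              (P : Subgroup G)⁆ := by
        have e3 : Subgroup.lowerCentralSeries (⊤ : Subgroup ↥(P : Subgroup G)) (j+1)
            = ⁅Subgroup.lowerCentralSeries (⊤ : Subgroup ↥(P : Subgroup G)) j, ⊤⁆ := rfl
        rw [e3, Subgroup.map_commutator, ← MonoidHom.range_eq_map, Subgroup.range_subtype]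
      rw [hmapc, Subgroup.commutator_le]
      intro m hm g _
      have hgmem : g ∈ (((P : Subgroup G) : Set G) * (C : Set G) : Set G) := by
        have hmem : g ∈ ((((P : Subgroup G) ⊔ C) : Subgroup G) : Set G) := by
          rw [hPC]; exact Set.mem_univ g
        rwa [Subgroup.mul_normal] at hmem
      obtain ⟨a, ha, c, hc, rfl⟩ := hgmem
      have hmN : (m⁻¹ : G) ∈ N := N.inv_mem (iterComm_le_base hN (k+j) hm)
      have hcm : m⁻¹ * c = c * m⁻¹ := Subgroup.mem_centralizer_iff.mp hc m⁻¹ hmN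
      have hcomm : ⁅m, a * c⁆ = ⁅m, a⁆ := by
        rw [commutatorElement_def, commutatorElement_def, mul_inv_rev]
        have hkey : c * m⁻¹ * c⁻¹ = m⁻¹ := by rw [← hcm]; group
        calc m * (a * c) * m⁻¹ * (c⁻¹ * a⁻¹)
            = m * a * (c * m⁻¹ * c⁻¹) * a⁻¹ := by group
          _ = m * a * m⁻¹ * a⁻¹ := by rw [hkey]
      rw [hcomm]
      exact Subgroup.commutator_mem_commutator (ihj hm) ha
  have hPnil : Group.IsNilpotent ↥(P : Subgroup G) := P.2.isNilpotent
  obtain ⟨mm, hmm⟩ := nilpotent_iff_lowerCentralSeries.mp hPnil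
  have hbot : iterComm N (k + mm) = ⊥ := by
    have := hP2 mm
    rw [hmm, Subgroup.map_bot] at this
    exact le_bot_iff.mp this
  exact ⟨k + mm, le_ucs_of_iterComm_eq_bot _ N hbot⟩

end Aux3


section Aux4

variable {G : Type*} [Group G] [Finite G] {q : ℕ} [Fact q.Prime] {D : Subgroup G}

theorem map_sylowD_eq_inf (S : Sylow q ↥D) :
    ∃ R : Sylow q G, Subgroup.map D.subtype ↑S = D ⊓ R := by
  obtain ⟨R, hR⟩ := (S.2.map D.subtype).exists_le_sylow
  have h1 : IsPGroup q ↥(D ⊓ (R : Subgroup G)) := R.2.to_le inf_le_right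
  have h2 : IsPGroup q ((D ⊓ (R : Subgroup G)).comap D.subtype) :=
    h1.of_equiv (Subgroup.subgroupOfEquivOfLe inf_le_left).symm
  have h3 : (↑S : Subgroup ↥D) ≤ (D ⊓ (R : Subgroup G)).comap D.subtype := by
    intro x hx
    exact Subgroup.mem_comap.mpr
      (Subgroup.mem_inf.mpr ⟨x.2, hR (Subgroup.mem_map_of_mem _ hx)⟩)
  have h4 := S.3 h2 h3
  refine ⟨R, ?_⟩
  rw [← h4, Subgroup.map_comap_eq, Subgroup.range_subtype, ← inf_assoc, inf_idem]

theorem sylowD_normal (hnorm : ∀ R : Sylow q G, D ≤ Subgroup.normalizer ((R : Subgroup G) : Set G))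
    (S : Sylow q ↥D) : (↑S : Subgroup ↥D).Normal := by
  obtain ⟨R, hR⟩ := map_sylowD_eq_inf S
  have hS : (↑S : Subgroup ↥D) = (D ⊓ (R : Subgroup G)).comap D.subtype := by
    rw [← hR, Subgroup.comap_map_eq_self_of_injective (Subgroup.subtype_injective D)]
  rw [hS]
  constructor
  intro n hn d
  rw [Subgroup.mem_comap] at hn ⊢
  rw [Subgroup.coe_subtype] at hn ⊢
  have hco : ((d * n * d⁻¹ : ↥D) : G) = (d : G) * (n : G) * (d : G)⁻¹ := by
    push_cast; rfl
  rw [hco]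
  rcases Subgroup.mem_inf.mp hn with ⟨hn1, hn2⟩
  refine Subgroup.mem_inf.mpr ⟨?_, ?_⟩
  · exact D.mul_mem (D.mul_mem d.2 hn1) (D.inv_mem d.2)
  · exact (Subgroup.mem_normalizer_iff.mp (hnorm R d.2) (n : G)).mp hn2

theorem sylowD_unique (hnorm : ∀ R : Sylow q G, D ≤ Subgroup.normalizer ((R : Subgroup G) : Set G))
    (S S' : Sylow q ↥D) : S = S' := by
  haveI := sylowD_normal hnorm S
  obtain ⟨d, hd⟩ := MulAction.exists_smul_eq ↥D S S'
  rw [← hd, Sylow.smul_eq_of_normal]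

theorem inf_eq_map_sylowD (hDn : D.Normal)
    (hnorm : ∀ R : Sylow q G, D ≤ Subgroup.normalizer ((R : Subgroup G) : Set G))
    (R : Sylow q G) (S : Sylow q ↥D) :
    D ⊓ (R : Subgroup G) = Subgroup.map D.subtype ↑S := by
  have h2 : IsPGroup q ((D ⊓ (R : Subgroup G)).comap D.subtype) :=
    (R.2.to_le inf_le_right).of_equiv (Subgroup.subgroupOfEquivOfLe inf_le_left).symm
  obtain ⟨S₁, hS₁⟩ := h2.exists_le_sylow
  obtain ⟨R₁, hR₁⟩ := map_sylowD_eq_inf S₁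
  have hle : D ⊓ (R : Subgroup G) ≤ D ⊓ (R₁ : Subgroup G) := by
    rw [← hR₁]
    intro x hx
    exact ⟨⟨x, (Subgroup.mem_inf.mp hx).1⟩, hS₁ (Subgroup.mem_comap.mpr hx), rfl⟩
  obtain ⟨g, hg⟩ := MulAction.exists_smul_eq G R R₁
  have hconj : D ⊓ (R₁ : Subgroup G) = MulAut.conj g • (D ⊓ (R : Subgroup G)) := by
    rw [Subgroup.smul_inf, Subgroup.Normal.conj_smul_eq_self]
    congr 1
    rw [← hg, Sylow.smul_def, Sylow.pointwise_smul_def]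
  have hcard : Nat.card (D ⊓ (R₁ : Subgroup G) : Subgroup G)
      = Nat.card (D ⊓ (R : Subgroup G) : Subgroup G) := by
    rw [hconj]
    exact (Nat.card_congr (Subgroup.equivSMul (MulAut.conj g) (D ⊓ (R : Subgroup G))).toEquiv).symm
  have heq : D ⊓ (R : Subgroup G) = D ⊓ (R₁ : Subgroup G) := by
    apply SetLike.coe_injective
    apply Set.eq_of_subset_of_ncard_le hle
    rw [← Nat.card_coe_set_eq, ← Nat.card_coe_set_eq]
    exact hcard.le
  rw [heq, ← hR₁, sylowD_unique hnorm S₁ S]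

theorem inf_sylow_eq_inf (hDn : D.Normal)
    (hnorm : ∀ R : Sylow q G, D ≤ Subgroup.normalizer ((R : Subgroup G) : Set G))
    (R R' : Sylow q G) : D ⊓ (R : Subgroup G) = D ⊓ (R' : Subgroup G) := by
  have S : Sylow q ↥D := Classical.arbitrary _
  rw [inf_eq_map_sylowD hDn hnorm R S, inf_eq_map_sylowD hDn hnorm R' S]

theorem inf_sylow_normal_G (hDn : D.Normal)
    (hnorm : ∀ R : Sylow q G, D ≤ Subgroup.normalizer ((R : Subgroup G) : Set G))
    (R : Sylow q G) : (D ⊓ (R : Subgroup G)).Normal := by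
  constructor
  intro n hn g
  have e1 : D ⊓ ((g • R : Sylow q G) : Subgroup G) = D ⊓ (R : Subgroup G) :=
    inf_sylow_eq_inf hDn hnorm _ _
  rw [← e1]
  rcases Subgroup.mem_inf.mp hn with ⟨hn1, hn2⟩
  refine Subgroup.mem_inf.mpr ⟨hDn.conj_mem n hn1 g, ?_⟩
  rw [Sylow.smul_def, Sylow.pointwise_smul_def, Subgroup.mem_pointwise_smul_iff_inv_smul_mem]
  have : (MulAut.conj g)⁻¹ • (g * n * g⁻¹) = n := by
    simp [MulAut.smul_def, MulAut.conj_inv_apply, mul_assoc]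
  rw [this]
  exact hn2
end Aux4


theorem nilpotent_iff_fstar_le_sylow_normalizers
    (G : Type*) [Group G] [Finite G] :
    Group.IsNilpotent G ↔
      ∀ (p : ℕ), p.Prime → ∀ P : Sylow p G,
        FStar G ≤ Subgroup.normalizer ((P : Subgroup G) : Set G) := by
  constructor
  · intro hnil p hp P
    haveI : Fact p.Prime := ⟨hp⟩
    have htfae : Group.IsNilpotent G ↔
        ∀ (p : ℕ) (_hp : Fact p.Prime) (P : Sylow p G), (↑P : Subgroup G).Normal :=
      (isNilpotent_of_finite_tfae (G := G)).out 0 3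
    have hPn : (P : Subgroup G).Normal := htfae.mp hnil p ⟨hp⟩ P
    rw [Subgroup.normalizer_eq_top_iff.mpr hPn]
    exact le_top
  · intro hyp
    -- FStar G is nilpotent
    have htfae : Group.IsNilpotent ↥(FStar G) ↔
        ∀ (q : ℕ) (_hq : Fact q.Prime) (S : Sylow q ↥(FStar G)), (↑S : Subgroup ↥(FStar G)).Normal :=
      (isNilpotent_of_finite_tfae (G := ↥(FStar G))).out 0 3
    have hFSnil : Group.IsNilpotent ↥(FStar G) :=
      htfae.mpr
        (fun q hq S => by
          haveI := hq
          exact sylowD_normal (fun R => hyp q hq.1 R) S)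
    have hFSle : FStar G ≤ Fitting G :=
      le_sSup (Set.mem_setOf_eq ▸ ⟨FStar_normal G, hFSnil⟩)
    have hFeq : FStar G = Fitting G := le_antisymm hFSle (Fitting_le_FStar G)
    have hFnorm : ∀ (q : ℕ), q.Prime → ∀ R : Sylow q G,
        Fitting G ≤ Subgroup.normalizer ((R : Subgroup G) : Set G) :=
      fun q hq R => hFeq ▸ hyp q hq R
    have hCF : Subgroup.centralizer ((Fitting G : Subgroup G) : Set G) ≤ Fitting G :=
      centralizer_Fitting_le G hFeq
    haveI hFn : (Fitting G).Normal := Fitting_normal G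
    -- every primary element of the Fitting subgroup is in some term of the ucs
    have key : ∀ q : ℕ, q.Prime → ∀ x ∈ Fitting G, (∃ j : ℕ, x ^ q ^ j = 1) →
        ∃ k, x ∈ Subgroup.upperCentralSeries G k := by
      intro q hq x hxF hxq
      haveI : Fact q.Prime := ⟨hq⟩
      obtain ⟨R₀⟩ := (inferInstance : Nonempty (Sylow q G))
      have hQn : (Fitting G ⊓ (R₀ : Subgroup G)).Normal :=
        inf_sylow_normal_G hFn (hFnorm q hq) R₀
      have hQp : IsPGroup q ↥(Fitting G ⊓ (R₀ : Subgroup G)) := R₀.2.to_le inf_le_right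
      have hzp : ∀ (y : G), (∃ j : ℕ, y ^ q ^ j = 1) → IsPGroup q (Subgroup.zpowers y) := by
        intro y hy w
        obtain ⟨j, hj⟩ := hy
        obtain ⟨i, hi⟩ := Subgroup.mem_zpowers_iff.mp w.2
        refine ⟨j, ?_⟩
        have hco : ((w ^ q ^ j : ↥(Subgroup.zpowers y)) : G) = (w : G) ^ q ^ j := by
          push_cast; rfl
        have hw : (w : G) ^ q ^ j = 1 := by
          rw [← hi, ← zpow_natCast (y ^ i), ← zpow_mul, mul_comm, zpow_mul, zpow_natCast, hj,
            one_zpow]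
        exact Subtype.ext (by rw [hco, hw]; rfl)
      have hxQ : x ∈ Fitting G ⊓ (R₀ : Subgroup G) := by
        obtain ⟨R', hR'⟩ := (hzp x hxq).exists_le_sylow
        have hxR' : x ∈ (R' : Subgroup G) := hR' (Subgroup.mem_zpowers x)
        have := inf_sylow_eq_inf hFn (hFnorm q hq) R' R₀
        exact this ▸ (Subgroup.mem_inf.mpr ⟨hxF, hxR'⟩)
      -- all r-primary elements for r ≠ q centralize Q
      have hcent : ∀ r : ℕ, r.Prime → r ≠ q → ∀ y : G, (∃ k : ℕ, y ^ r ^ k = 1) →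
          y ∈ Subgroup.centralizer ((Fitting G ⊓ (R₀ : Subgroup G) : Subgroup G) : Set G) := by
        intro r hr hrq y hy
        haveI : Fact r.Prime := ⟨hr⟩
        have hzpr : IsPGroup r (Subgroup.zpowers y) := by
          intro w
          obtain ⟨k, hk⟩ := hy
          obtain ⟨i, hi⟩ := Subgroup.mem_zpowers_iff.mp w.2
          refine ⟨k, ?_⟩
          have hco : ((w ^ r ^ k : ↥(Subgroup.zpowers y)) : G) = (w : G) ^ r ^ k := by
            push_cast; rfl
          have hw : (w : G) ^ r ^ k = 1 := by
            rw [← hi, ← zpow_natCast (y ^ i), ← zpow_mul, mul_comm, zpow_mul, zpow_natCast, hk,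
              one_zpow]
          exact Subtype.ext (by rw [hco, hw]; rfl)
        obtain ⟨W, hW⟩ := hzpr.exists_le_sylow
        have hyW : y ∈ (W : Subgroup G) := hW (Subgroup.mem_zpowers y)
        rw [Subgroup.mem_centralizer_iff]
        intro h hh
        have hhQ : h ∈ Fitting G ⊓ (R₀ : Subgroup G) := hh
        have hcomm1 : ⁅y, h⁆ ∈ Fitting G ⊓ (R₀ : Subgroup G) := by
          rw [commutatorElement_def]
          have h1 : y * h * y⁻¹ ∈ Fitting G ⊓ (R₀ : Subgroup G) := hQn.conj_mem h hhQ y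
          exact Subgroup.mul_mem _ h1 (Subgroup.inv_mem _ hhQ)
        have hcomm2 : ⁅y, h⁆ ∈ (W : Subgroup G) := by
          rw [commutatorElement_def]
          have hhF : h ∈ Fitting G := (Subgroup.mem_inf.mp hhQ).1
          have hnorm : h ∈ Subgroup.normalizer ((W : Subgroup G) : Set G) := hFnorm r hr W hhF
          have h2 : h * y⁻¹ * h⁻¹ ∈ (W : Subgroup G) := by
            have := (Subgroup.mem_normalizer_iff.mp hnorm (y⁻¹)).mp
              (Subgroup.inv_mem _ hyW)
            exact this
          have h3 : y * (h * y⁻¹ * h⁻¹) ∈ (W : Subgroup G) := Subgroup.mul_mem _ hyW h2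
          have h4 : y * (h * y⁻¹ * h⁻¹) = y * h * y⁻¹ * h⁻¹ := by group
          rwa [h4] at h3
        have hdisj : Disjoint (Fitting G ⊓ (R₀ : Subgroup G)) (W : Subgroup G) :=
          IsPGroup.disjoint_of_ne q r (Ne.symm hrq) _ _ hQp W.2
        have hone : ⁅y, h⁆ = 1 := Subgroup.disjoint_def.mp hdisj hcomm1 hcomm2
        have := commutatorElement_eq_one_iff_mul_comm.mp hone
        exact this.symm
      -- the quotient by the centralizer is a q-group
      have hpg : ∀ g : G, ∃ k : ℕ, g ^ q ^ k ∈
          Subgroup.centralizer ((Fitting G ⊓ (R₀ : Subgroup G) : Subgroup G) : Set G) := by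
        intro g
        obtain ⟨y, z, hy, hz, hgyz, hyk, hzd⟩ := primary_split g hq
        have hzc : z ∈ Subgroup.centralizer
            ((Fitting G ⊓ (R₀ : Subgroup G) : Subgroup G) : Set G) := by
          apply mem_of_coprime_order _ q hcent
          intro hdvd
          exact Nat.not_dvd_ordCompl hq ((orderOf_pos g).ne') (hdvd.trans hzd)
        have hcyz : Commute y z := by
          obtain ⟨i, hi⟩ := Subgroup.mem_zpowers_iff.mp hy
          obtain ⟨i', hi'⟩ := Subgroup.mem_zpowers_iff.mp hz
          rw [← hi, ← hi']
          exact Commute.zpow_zpow_self _ _ _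
        set mq := (orderOf g).factorization q with hmq
        refine ⟨mq, ?_⟩
        have hgp : g ^ q ^ mq = y ^ q ^ mq * z ^ q ^ mq := by
          rw [hgyz]
          exact hcyz.mul_pow _
        rw [hgp, hyk, one_mul]
        exact Subgroup.pow_mem _ hzc _
      obtain ⟨k, hk⟩ := le_ucs_of_pgroup_action hq _ hQn hQp hpg
      exact ⟨k, hk hxQ⟩
    -- Fitting G is contained in a stable term of the upper central series
    obtain ⟨K, hK⟩ := exists_ucs_stable G
    have hFK : Fitting G ≤ Subgroup.upperCentralSeries G K := by
      apply le_of_primary_mem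
      intro r hr y hyF hyk
      obtain ⟨k, hk⟩ := key r hr y hyF hyk
      exact hK k hk
    -- the K-th lower central series term centralizes Fitting G
    have hlcs : Subgroup.lowerCentralSeries (⊤ : Subgroup G) K ≤ Fitting G := by
      have h1 : ⁅Subgroup.lowerCentralSeries (⊤ : Subgroup G) K, Subgroup.upperCentralSeries G K⁆
          ≤ Subgroup.upperCentralSeries G (K - (K+1)) := lcs_ucs_le G K K
      have h2 : K - (K+1) = 0 := by omega
      rw [h2, Subgroup.upperCentralSeries_zero] at h1
      have h3 : Subgroup.lowerCentralSeries (⊤ : Subgroup G) K ≤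
          Subgroup.centralizer ((Fitting G : Subgroup G) : Set G) := by
        intro x hx
        rw [Subgroup.mem_centralizer_iff]
        intro h hh
        have hmem : ⁅x, h⁆ ∈ (⊥ : Subgroup G) :=
          h1 (Subgroup.commutator_mem_commutator hx (hFK hh))
        have hone : ⁅x, h⁆ = 1 := Subgroup.mem_bot.mp hmem
        exact (commutatorElement_eq_one_iff_mul_comm.mp hone).symm
      exact h3.trans hCF
    -- descend
    have hdown : ∀ r : ℕ, Subgroup.lowerCentralSeries (⊤ : Subgroup G) (K + r) ≤ Subgroup.upperCentralSeries G (K - r) := by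
      intro r
      induction r with
      | zero =>
        rw [Nat.add_zero, Nat.sub_zero]
        exact hlcs.trans hFK
      | succ r ihr =>
        have e : Subgroup.lowerCentralSeries (⊤ : Subgroup G) (K + r + 1) = ⁅Subgroup.lowerCentralSeries (⊤ : Subgroup G) (K + r), ⊤⁆ := rfl
        have e2 : K + (r + 1) = K + r + 1 := rfl
        rw [e2, e]
        calc ⁅Subgroup.lowerCentralSeries (⊤ : Subgroup G) (K + r), (⊤ : Subgroup G)⁆
            = ⁅(⊤ : Subgroup G), Subgroup.lowerCentralSeries (⊤ : Subgroup G) (K + r)⁆ := Subgroup.commutator_comm _ _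
          _ ≤ ⁅(⊤ : Subgroup G), Subgroup.upperCentralSeries G (K - r)⁆ :=
              Subgroup.commutator_mono le_rfl ihr
          _ ≤ Subgroup.upperCentralSeries G (K - r - 1) := top_ucs_le G _
          _ = Subgroup.upperCentralSeries G (K - (r + 1)) := by
              have hidx : K - r - 1 = K - (r+1) := by omega
              rw [hidx]
    rw [nilpotent_iff_lowerCentralSeries]
    refine ⟨K + K, ?_⟩
    have := hdown K
    rw [Nat.sub_self, Subgroup.upperCentralSeries_zero] at this
    exact le_bot_iff.mp this
end
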